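/- Let G be a finite graph and let A ≠ B be subsets of its vertex set with |A| = |B| = k, such that the induced subgraphs G[A] and G[B] are connected and A ∩ B ≠ ∅. Then there exists a vertex subset C with |C| = k such that G[C] is connected and |A ∩ C| = k − 1. -/

import Mathlib

open SimpleGraph

/-- Along a walk in an induced subgraph starting inside `A` and ending outside `A`,
there is an edge from `A` to the complement of `A` (within `s`). -/
lemma cross_edge_aux {V : Type*} [DecidableEq V] (G : SimpleGraph V) (s : Set V) (A : Finset V) :
    ∀ {u v : s} (_ : (G.induce s).Walk u v), (u : V) ∈ A → (v : V) ∉ A →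
      ∃ x y : V, x ∈ s ∧ x ∉ A ∧ y ∈ A ∧ G.Adj y x := by
  intro u v p
  induction p with
  | nil => intro hu hv; exact absurd hu hv
  | @cons a b c h q ih =>
    intro hu hv
    by_cases hb : (b : V) ∈ A
    · exact ih hb hv
    · exact ⟨b, a, b.2, hb, hu, h⟩

/-- From a connected induced subgraph on a finset `s` with more than one vertex, one can
delete some vertex different from a prescribed vertex `x`, keeping connectivity. -/
lemma erase_connected_aux {V : Type*} [Fintype V] [DecidableEq V] (G : SimpleGraph V)
    (s : Finset V) (x : V) (hx : x ∈ s) (hcard : 1 < s.card)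
    (hc : (G.induce (s : Set V)).Connected) :
    ∃ a ∈ s, a ≠ x ∧ (G.induce ((s.erase a : Finset V) : Set V)).Connected := by
  classical
  set H := G.induce (s : Set V) with hH
  have hxs : x ∈ (s : Set V) := by exact_mod_cast hx
  set xs : (s : Set V) := ⟨x, hxs⟩ with hxsdef
  obtain ⟨y, hy, hyx⟩ := Finset.exists_mem_ne hcard x
  have hys : y ∈ (s : Set V) := by exact_mod_cast hy
  set t : Finset (s : Set V) := Finset.univ.filter (fun b => b ≠ xs) with ht
  have htne : t.Nonempty := by
    refine ⟨⟨y, hys⟩, ?_⟩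
    simp only [ht, Finset.mem_filter, Finset.mem_univ, true_and]
    exact fun h => hyx (congrArg Subtype.val h)
  obtain ⟨as, hast, hmax⟩ := t.exists_max_image (fun b => H.dist xs b) htne
  have hasne : as ≠ xs := (Finset.mem_filter.mp hast).2
  have hasmem : (as : V) ∈ s := by exact_mod_cast as.2
  refine ⟨(as : V), hasmem, fun h => hasne (Subtype.ext h), ?_⟩
  have hxe : x ∈ ((s.erase (as : V) : Finset V) : Set V) := by
    simp only [Finset.coe_erase, Set.mem_diff, Set.mem_singleton_iff]
    exact ⟨hxs, fun h => hasne (Subtype.ext h.symm)⟩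
  apply G.induce_connected_of_patches x hxe
  intro v hv
  have hvs : v ∈ (s : Set V) := by
    simp only [Finset.coe_erase, Set.mem_diff] at hv; exact hv.1
  have hva : v ≠ (as : V) := by
    simp only [Finset.coe_erase, Set.mem_diff, Set.mem_singleton_iff] at hv; exact hv.2
  set vs : (s : Set V) := ⟨v, hvs⟩ with hvsdef
  obtain ⟨p, hp⟩ := hc.exists_walk_length_eq_dist xs vs
  have hns : as ∉ p.support := by
    intro hmem
    have h1 : H.dist xs as ≤ (p.takeUntil as hmem).length := SimpleGraph.dist_le _
    have h2 : H.dist as vs ≤ (p.dropUntil as hmem).length := SimpleGraph.dist_le _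
    have h3 : (p.takeUntil as hmem).length + (p.dropUntil as hmem).length = p.length := by
      rw [← SimpleGraph.Walk.length_append, SimpleGraph.Walk.take_spec]
    have h4 : 0 < H.dist as vs :=
      hc.pos_dist_of_ne (fun h => hva (congrArg Subtype.val h).symm)
    have h5 : H.dist xs vs ≤ H.dist xs as := by
      by_cases hvx : vs = xs
      · rw [hvx, SimpleGraph.dist_self]; exact Nat.zero_le _
      · exact hmax vs (Finset.mem_filter.mpr ⟨Finset.mem_univ _, hvx⟩)
    omega
  set q := p.map (SimpleGraph.Embedding.induce (s : Set V)).toHom with hq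
  have hsup : ∀ w ∈ q.support, w ∈ ((s.erase (as : V) : Finset V) : Set V) := by
    intro w hw
    rw [hq, SimpleGraph.Walk.support_map, List.mem_map] at hw
    obtain ⟨z, hz, rfl⟩ := hw
    simp only [Finset.coe_erase, Set.mem_diff, Set.mem_singleton_iff]
    refine ⟨z.2, fun h => hns ?_⟩
    have : z = as := Subtype.ext h
    rwa [← this]
  refine ⟨{w | w ∈ q.support}, hsup, q.start_mem_support, q.end_mem_support, ?_⟩
  exact (q.connected_induce_support).preconnected _ _

/-- For two distinct intersecting connected `k`-sets `A`, `B`, there is a connected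
`k`-set `C` sharing all but one vertex with `A`. -/
theorem stmt_8 {V : Type*} [Fintype V] [DecidableEq V] (G : SimpleGraph V) (k : ℕ)
    (A B : Finset V) (hne : A ≠ B) (hA : A.card = k) (hB : B.card = k)
    (hAc : (G.induce (A : Set V)).Connected) (hBc : (G.induce (B : Set V)).Connected)
    (hAB : (A ∩ B).Nonempty) :
    ∃ C : Finset V, C.card = k ∧ (G.induce (C : Set V)).Connected ∧
      (A ∩ C).card = k - 1 := by
  classical
  obtain ⟨u0, hu0⟩ := hAB
  have hu0A : u0 ∈ A := (Finset.mem_inter.mp hu0).1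
  have hu0B : u0 ∈ B := (Finset.mem_inter.mp hu0).2
  -- k ≥ 2
  have hk2 : 2 ≤ k := by
    by_contra h
    push_neg at h
    interval_cases k
    · exact hne (by rw [Finset.card_eq_zero.mp hA, Finset.card_eq_zero.mp hB])
    · obtain ⟨a, ha⟩ := Finset.card_eq_one.mp hA
      obtain ⟨b, hb⟩ := Finset.card_eq_one.mp hB
      apply hne
      rw [ha, hb]
      rw [ha, Finset.mem_singleton] at hu0A
      rw [hb, Finset.mem_singleton] at hu0B
      rw [← hu0A, ← hu0B]
  -- B \ A is nonempty
  have hBA : (B \ A).Nonempty := by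
    rw [Finset.sdiff_nonempty]
    intro hsub
    exact hne (Finset.eq_of_subset_of_card_le hsub (by omega)).symm
  obtain ⟨v0, hv0⟩ := hBA
  have hv0B : v0 ∈ B := (Finset.mem_sdiff.mp hv0).1
  have hv0A : v0 ∉ A := (Finset.mem_sdiff.mp hv0).2
  -- find a boundary edge
  have hu0B' : u0 ∈ (B : Set V) := by exact_mod_cast hu0B
  have hv0B' : v0 ∈ (B : Set V) := by exact_mod_cast hv0B
  obtain ⟨p⟩ := hBc.preconnected ⟨u0, hu0B'⟩ ⟨v0, hv0B'⟩
  obtain ⟨x, y, hxB, hxA, hyA, hadj⟩ := cross_edge_aux G (B : Set V) A p hu0A hv0A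
  -- S = insert x A is connected
  have hyA' : y ∈ (A : Set V) := by exact_mod_cast hyA
  have hScon : (G.induce ((insert x A : Finset V) : Set V)).Connected := by
    have : ((insert x A : Finset V) : Set V) = (A : Set V) ∪ {x} := by
      rw [Finset.coe_insert, Set.insert_eq, Set.union_comm]
    rw [this]
    refine G.connected_induce_union hAc.preconnected (?_ : (G.induce ({x} : Set V)).Connected).preconnected hyA' rfl hadj
    constructor
    · rintro ⟨a, ha⟩ ⟨b, hb⟩
      simp only [Set.mem_singleton_iff] at ha hb
      subst ha; subst hb; rfl
  have hxS : x ∈ insert x A := Finset.mem_insert_self x A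
  have hScard : (insert x A).card = k + 1 := by
    rw [Finset.card_insert_of_notMem hxA, hA]
  obtain ⟨a, haS, hax, hCcon⟩ :=
    erase_connected_aux G (insert x A) x hxS (by omega) hScon
  have haA : a ∈ A := by
    rcases Finset.mem_insert.mp haS with h | h
    · exact absurd h hax
    · exact h
  refine ⟨(insert x A).erase a, ?_, hCcon, ?_⟩
  · rw [Finset.card_erase_of_mem haS, hScard]; omega
  · have hACeq : A ∩ (insert x A).erase a = A.erase a := by
      ext w
      simp only [Finset.mem_inter, Finset.mem_erase, Finset.mem_insert]
      constructor
      · rintro ⟨hwA, hwa, _⟩; exact ⟨hwa, hwA⟩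
      · rintro ⟨hwa, hwA⟩; exact ⟨hwA, hwa, Or.inr hwA⟩
    rw [hACeq, Finset.card_erase_of_mem haA, hA]
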